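/- Let p > 2 be a prime, f ≥ 1, and fix an index s_0 ∈ {0, ..., f−1}. Let x = (x_0, ..., x_{f−1}) and y = (y_0, ..., y_{f−1}) be tuples of integers with 0 ≤ x_s ≤ p−1 and 0 ≤ y_s ≤ p−1 for all s, and with x_{s_0} ≠ p−1 and y_{s_0} ≠ p−1. If Σ_{s=0}^{f−1} p^{f−1−s} x_s ≡ Σ_{s=0}^{f−1} p^{f−1−s} y_s (mod p^f − 1), then x_s = y_s for every s. -/

import Mathlib

lemma geom_aux (p : ℕ) (hp : 1 ≤ p) : ∀ f : ℕ, ∑ i ∈ Finset.range f, p ^ i * (p - 1) = p ^ f - 1 := by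
  intro f
  induction f with
  | zero => simp
  | succ f ih =>
    rw [Finset.sum_range_succ, ih]
    have h1 : 1 ≤ p ^ f := Nat.one_le_pow _ _ hp
    have h2 : p ^ f * (p - 1) = p ^ (f + 1) - p ^ f := by
      rw [Nat.mul_sub, pow_succ, mul_comm (p ^ f) p, mul_one, mul_comm]
    have h3 : p ^ f ≤ p ^ (f + 1) := Nat.pow_le_pow_right hp (by omega)
    omega

lemma sum_pow_eq (p f : ℕ) (hp : 1 ≤ p) :
    ∑ s : Fin f, p ^ (f - 1 - (s : ℕ)) * (p - 1) = p ^ f - 1 := by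
  rw [Fin.sum_univ_eq_sum_range (fun i => p ^ (f - 1 - i) * (p - 1))]
  rw [Finset.sum_range_reflect (fun i => p ^ i * (p - 1)) f]
  exact geom_aux p hp f

lemma sum_bound {p f : ℕ} (hp : 1 ≤ p) (x : Fin f → ℕ) (hx : ∀ s, x s ≤ p - 1) :
    ∑ s : Fin f, p ^ (f - 1 - (s : ℕ)) * x s ≤ p ^ f - 1 := by
  calc ∑ s : Fin f, p ^ (f - 1 - (s : ℕ)) * x s
      ≤ ∑ s : Fin f, p ^ (f - 1 - (s : ℕ)) * (p - 1) :=
        Finset.sum_le_sum fun s _ => Nat.mul_le_mul_left _ (hx s)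
    _ = p ^ f - 1 := sum_pow_eq p f hp

lemma sum_bound_strict {p f : ℕ} (hp : 2 ≤ p) (s0 : Fin f) (x : Fin f → ℕ)
    (hx : ∀ s, x s ≤ p - 1) (hx0 : x s0 ≠ p - 1) :
    ∑ s : Fin f, p ^ (f - 1 - (s : ℕ)) * x s < p ^ f - 1 := by
  have hlt : ∑ s : Fin f, p ^ (f - 1 - (s : ℕ)) * x s
      < ∑ s : Fin f, p ^ (f - 1 - (s : ℕ)) * (p - 1) := by
    apply Finset.sum_lt_sum (fun s _ => Nat.mul_le_mul_left _ (hx s))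
    refine ⟨s0, Finset.mem_univ _, ?_⟩
    have h1 : x s0 < p - 1 := lt_of_le_of_ne (hx s0) hx0
    have h2 : 0 < p ^ (f - 1 - (s0 : ℕ)) := Nat.pow_pos (by omega)
    exact mul_lt_mul_of_pos_left h1 h2
  rw [sum_pow_eq p f (by omega)] at hlt
  exact hlt

lemma digits_unique (p : ℕ) (hp : 2 ≤ p) :
    ∀ f : ℕ, ∀ x y : Fin f → ℕ, (∀ s, x s ≤ p - 1) → (∀ s, y s ≤ p - 1) →
      (∑ s : Fin f, p ^ (f - 1 - (s : ℕ)) * x s) = (∑ s : Fin f, p ^ (f - 1 - (s : ℕ)) * y s) →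
      x = y := by
  intro f
  induction f with
  | zero => intro x y _ _ _; funext s; exact s.elim0
  | succ f ih =>
    intro x y hx hy hsum
    rw [Fin.sum_univ_succ, Fin.sum_univ_succ] at hsum
    have hexp : ∀ i : Fin f, f + 1 - 1 - ((i.succ : Fin (f+1)) : ℕ) = f - 1 - (i : ℕ) := by
      intro i
      simp [Fin.val_succ]
      omega
    have hx' : ∀ s : Fin f, (x ∘ Fin.succ) s ≤ p - 1 := fun s => hx s.succ
    have hy' : ∀ s : Fin f, (y ∘ Fin.succ) s ≤ p - 1 := fun s => hy s.succ
    have hA : ∑ i : Fin f, p ^ (f + 1 - 1 - ((i.succ : Fin (f+1)) : ℕ)) * x i.succ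
        = ∑ i : Fin f, p ^ (f - 1 - (i : ℕ)) * (x ∘ Fin.succ) i := by
      apply Finset.sum_congr rfl; intro i _; rw [hexp i]; rfl
    have hB : ∑ i : Fin f, p ^ (f + 1 - 1 - ((i.succ : Fin (f+1)) : ℕ)) * y i.succ
        = ∑ i : Fin f, p ^ (f - 1 - (i : ℕ)) * (y ∘ Fin.succ) i := by
      apply Finset.sum_congr rfl; intro i _; rw [hexp i]; rfl
    rw [hA, hB] at hsum
    set a := ∑ i : Fin f, p ^ (f - 1 - (i : ℕ)) * (x ∘ Fin.succ) i with ha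
    set b := ∑ i : Fin f, p ^ (f - 1 - (i : ℕ)) * (y ∘ Fin.succ) i with hb
    have hbnda : a ≤ p ^ f - 1 := sum_bound (by omega) _ hx'
    have hbndb : b ≤ p ^ f - 1 := sum_bound (by omega) _ hy'
    have hpf : 1 ≤ p ^ f := Nat.one_le_pow _ _ (by omega)
    have h0 : ((0 : Fin (f+1)) : ℕ) = 0 := rfl
    rw [h0] at hsum
    have he : f + 1 - 1 - 0 = f := by omega
    rw [he] at hsum
    -- hsum : p ^ f * x 0 + a = p ^ f * y 0 + b
    have hx0y0 : x 0 = y 0 := by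
      by_contra hne
      rcases Nat.lt_or_ge (x 0) (y 0) with h | h
      · have : p ^ f * x 0 + a < p ^ f * y 0 + b := by
          have : p ^ f * x 0 + p ^ f ≤ p ^ f * y 0 := by
            have : x 0 + 1 ≤ y 0 := h
            calc p ^ f * x 0 + p ^ f = p ^ f * (x 0 + 1) := by ring
              _ ≤ p ^ f * y 0 := Nat.mul_le_mul_left _ this
          omega
        omega
      · have h' : y 0 < x 0 := lt_of_le_of_ne h (fun e => hne e.symm)
        have : p ^ f * y 0 + b < p ^ f * x 0 + a := by
          have : p ^ f * y 0 + p ^ f ≤ p ^ f * x 0 := by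
            have : y 0 + 1 ≤ x 0 := h'
            calc p ^ f * y 0 + p ^ f = p ^ f * (y 0 + 1) := by ring
              _ ≤ p ^ f * x 0 := Nat.mul_le_mul_left _ this
          omega
        omega
    have hab : a = b := by rw [hx0y0] at hsum; omega
    have htail : x ∘ Fin.succ = y ∘ Fin.succ := ih _ _ hx' hy' hab
    funext s
    refine Fin.cases ?_ ?_ s
    · exact hx0y0
    · intro i; exact congrFun htail i

/-- combinatorial core of Condition (C-1) in the paper.
If `x, y : Fin f → ℕ` take values in `[0, p−1]`, avoid `p−1` at the fixed index `s₀`,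
and satisfy `Σ p^{f−1−s} x_s ≡ Σ p^{f−1−s} y_s (mod p^f − 1)`, then `x = y`. -/
theorem stmt7 {p f : ℕ} (hp : p.Prime) (hp2 : 2 < p) (hf : 1 ≤ f)
    (s0 : Fin f) (x y : Fin f → ℕ)
    (hx : ∀ s, x s ≤ p - 1) (hy : ∀ s, y s ≤ p - 1)
    (hx0 : x s0 ≠ p - 1) (hy0 : y s0 ≠ p - 1)
    (hcong : (∑ s : Fin f, p ^ (f - 1 - (s : ℕ)) * x s)
      ≡ (∑ s : Fin f, p ^ (f - 1 - (s : ℕ)) * y s) [MOD p ^ f - 1]) :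
    x = y := by
  have hp1 : 2 ≤ p := by omega
  have hA : ∑ s : Fin f, p ^ (f - 1 - (s : ℕ)) * x s < p ^ f - 1 :=
    sum_bound_strict hp1 s0 x hx hx0
  have hB : ∑ s : Fin f, p ^ (f - 1 - (s : ℕ)) * y s < p ^ f - 1 :=
    sum_bound_strict hp1 s0 y hy hy0
  have heq : (∑ s : Fin f, p ^ (f - 1 - (s : ℕ)) * x s)
      = ∑ s : Fin f, p ^ (f - 1 - (s : ℕ)) * y s := by
    have := hcong
    unfold Nat.ModEq at this
    rwa [Nat.mod_eq_of_lt hA, Nat.mod_eq_of_lt hB] at this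
  exact digits_unique p hp1 f x y hx hy heq
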